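/- arXiv:0901.4239 — 3 statements merged into one kernel-verified Lean document; each statement's English description precedes it below -/
import Mathlib

section
/- Let η ∈ GL(n, ℤ) be semisimple (i.e., diagonalizable over ℂ) and let [η] denote its GL(n, ℤ)-conjugacy class. Then every element of the closure of [η] in GL(n, ℤ_p) is conjugate to η by an element of GL(n, ℤ_p); in particular, every element of the closure is semisimple. -/
open Matrix Topology Filter Polynomial

/-- A matrix over `R` is semisimple with respect to a ring hom `f : R →+* K`
(with `K` typically algebraically closed) if its image under `f` is diagonalizable. -/
def Matrix.IsSemisimpleOver {n : ℕ} {R K : Type*} [CommRing R] [Field K] (f : R →+* K)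
    (A : Matrix (Fin n) (Fin n) R) : Prop :=
  ∃ P : GL (Fin n) K, ∃ d : Fin n → K,
    A.map f = (P : Matrix (Fin n) (Fin n) K) * Matrix.diagonal d * ((P⁻¹ : GL (Fin n) K) : Matrix (Fin n) (Fin n) K)

section Aux

/-- Units of a compact Hausdorff topological monoid form a compact space. -/
lemma aux_units_compactSpace {M : Type*} [Monoid M] [TopologicalSpace M] [CompactSpace M]
    [T2Space M] [ContinuousMul M] : CompactSpace Mˣ := by
  haveI : CompactSpace Mᵐᵒᵖ := MulOpposite.opHomeomorph.compactSpace
  have hclosed : IsClosed (Set.range (Units.embedProduct M)) := by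
    have hset : Set.range (Units.embedProduct M) =
        {q : M × Mᵐᵒᵖ | q.1 * MulOpposite.unop q.2 = 1 ∧ MulOpposite.unop q.2 * q.1 = 1} := by
      ext q
      constructor
      · rintro ⟨u, rfl⟩
        simp [Units.embedProduct]
      · rintro ⟨h1, h2⟩
        exact ⟨⟨q.1, MulOpposite.unop q.2, h1, h2⟩, by simp [Units.embedProduct]⟩
    rw [hset]
    have h1 : IsClosed {q : M × Mᵐᵒᵖ | q.1 * MulOpposite.unop q.2 = 1} :=
      isClosed_eq (continuous_fst.mul (MulOpposite.continuous_unop.comp continuous_snd))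
        continuous_const
    have h2 : IsClosed {q : M × Mᵐᵒᵖ | MulOpposite.unop q.2 * q.1 = 1} :=
      isClosed_eq ((MulOpposite.continuous_unop.comp continuous_snd).mul continuous_fst)
        continuous_const
    exact h1.inter h2
  refine ⟨?_⟩
  rw [Units.isEmbedding_embedProduct.isCompact_iff, Set.image_univ]
  exact hclosed.isCompact

/-- Conjugation by a unit as an algebra homomorphism. -/
noncomputable def conjAlgHom {K A : Type*} [CommSemiring K] [Semiring A] [Algebra K A]
    (u : Aˣ) : A →ₐ[K] A where
  toFun x := ↑u * x * ↑u⁻¹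
  map_one' := by simp
  map_mul' x y := by simp [mul_assoc]
  map_zero' := by simp
  map_add' x y := by simp [mul_add, add_mul]
  commutes' c := by
    simp only [Algebra.algebraMap_eq_smul_one, mul_smul_comm, smul_mul_assoc, mul_one]
    simp

lemma aeval_units_conj {K A : Type*} [CommSemiring K] [Semiring A] [Algebra K A]
    (u : Aˣ) (x : A) (p : K[X]) :
    aeval ((u : A) * x * (↑u⁻¹ : A)) p = (u : A) * aeval x p * (↑u⁻¹ : A) :=
  aeval_algHom_apply (conjAlgHom u) x p

lemma units_conj_cancel {A : Type*} [Monoid A] (u : Aˣ) (x : A) :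
    (↑u⁻¹ : A) * ((u : A) * x * (↑u⁻¹ : A)) * (u : A) = x := by
  simp [mul_assoc]

lemma aeval_diagonal {K : Type*} [CommRing K] {n : ℕ} (d : Fin n → K) (p : K[X]) :
    aeval (Matrix.diagonal d) p = Matrix.diagonal (fun i => p.eval (d i)) := by
  have h : aeval ((Matrix.diagonalAlgHom (n := Fin n) (α := K) K) d) p
      = (Matrix.diagonalAlgHom (n := Fin n) (α := K) K) (aeval d p) :=
    aeval_algHom_apply _ d p
  simp only [Matrix.diagonalAlgHom_apply] at h
  rw [h]
  have h2 : (aeval d p : Fin n → K) = fun i => p.eval (d i) := by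
    funext k
    rw [Polynomial.aeval_fn_apply]
    simp [Polynomial.aeval_def, Polynomial.eval₂_eq_eval_map]
  rw [h2]

lemma matrix_map_comp {n : ℕ} {R S T : Type*} [CommRing R] [CommRing S] [CommRing T]
    (A : Matrix (Fin n) (Fin n) R) (f : R →+* S) (g : S →+* T) :
    (A.map f).map g = A.map (g.comp f) := by
  rw [Matrix.map_map]
  rfl

lemma aeval_matrix_map {K L : Type*} [CommRing K] [CommRing L] {n : ℕ} (f : K →+* L)
    (A : Matrix (Fin n) (Fin n) K) (p : K[X]) :
    (Polynomial.aeval A p).map f = Polynomial.aeval (A.map f) (p.map f) := by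
  have h1 : (Polynomial.aeval A p).map f = f.mapMatrix (Polynomial.aeval A p) := rfl
  rw [h1, Polynomial.aeval_def, Polynomial.hom_eval₂, Polynomial.aeval_def,
    Polynomial.eval₂_map]
  congr 1
  ext c : 1
  simp [Matrix.algebraMap_eq_diagonal, Matrix.diagonal_map]

/-- A matrix over an algebraically closed field annihilated by a squarefree polynomial is
diagonalizable. -/
lemma diag_of_squarefree {K : Type*} [Field K] [IsAlgClosed K] {n : ℕ}
    (A : Matrix (Fin n) (Fin n) K) {q : K[X]} (hq : Squarefree q)
    (h0 : Polynomial.aeval A q = 0) :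
    ∃ P : GL (Fin n) K, ∃ d : Fin n → K,
      A = (P : Matrix (Fin n) (Fin n) K) * Matrix.diagonal d
        * ((P⁻¹ : GL (Fin n) K) : Matrix (Fin n) (Fin n) K) := by
  classical
  set f : Module.End K (Fin n → K) := Matrix.toLinAlgEquiv' A with hf
  have hfq : Polynomial.aeval f q = 0 := by
    have h : Polynomial.aeval ((Matrix.toLinAlgEquiv' (R := K) (n := Fin n)) A) q
        = (Matrix.toLinAlgEquiv' (R := K) (n := Fin n)) (Polynomial.aeval A q) :=
      aeval_algHom_apply _ A q
    rw [hf, h, h0, map_zero]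
  have hss : f.IsSemisimple := Module.End.isSemisimple_of_squarefree_aeval_eq_zero hq hfq
  have htop : ⨆ μ : K, f.eigenspace μ = ⊤ := by
    have h1 := Module.End.iSup_maxGenEigenspace_eq_top f
    have h2 : ∀ μ : K, f.maxGenEigenspace μ = f.eigenspace μ := fun μ =>
      hss.isFinitelySemisimple.maxGenEigenspace_eq_eigenspace μ
    simpa only [h2] using h1
  set T : Set (Fin n → K) := {v | ∃ μ : K, v ∈ f.eigenspace μ} with hT
  have hspanT : ⊤ ≤ Submodule.span K T := by
    rw [← htop]
    exact iSup_le fun μ v hv => Submodule.subset_span ⟨μ, hv⟩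
  obtain ⟨s, hsT, hs_span, hs_ind⟩ := exists_linearIndependent K T
  have hb_span : ⊤ ≤ Submodule.span K (Set.range ((↑) : s → (Fin n → K))) := by
    rw [Subtype.range_coe, hs_span]
    exact hspanT
  let b₀ : Module.Basis s K (Fin n → K) := Module.Basis.mk hs_ind hb_span
  haveI : Fintype s := FiniteDimensional.fintypeBasisIndex b₀
  let e : s ≃ Fin n := b₀.indexEquiv (Pi.basisFun K (Fin n))
  let b : Module.Basis (Fin n) K (Fin n → K) := b₀.reindex e
  have hbT : ∀ i : Fin n, ∃ μ : K, f (b i) = μ • b i := by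
    intro i
    have hmem : (b i : Fin n → K) ∈ T := by
      have : b i = ((e.symm i : s) : Fin n → K) := by
        simp only [b, Module.Basis.reindex_apply, b₀, Module.Basis.mk_apply]
      rw [this]
      exact hsT (e.symm i).2
    obtain ⟨μ, hμ⟩ := hmem
    exact ⟨μ, Module.End.mem_eigenspace_iff.mp hμ⟩
  choose μ hμ using hbT
  set P : Matrix (Fin n) (Fin n) K := (Pi.basisFun K (Fin n)).toMatrix ⇑b with hP
  haveI : Invertible P := (Pi.basisFun K (Fin n)).invertibleToMatrix b
  refine ⟨unitOfInvertible P, μ, ?_⟩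
  have hPij : ∀ i j, P i j = b j i := by
    intro i j
    simp [hP, Module.Basis.toMatrix_apply]
  have key : A * P = P * Matrix.diagonal μ := by
    ext i j
    have h2 : A.mulVec (b j) = μ j • b j := by
      have := hμ j
      rwa [hf, Matrix.toLinAlgEquiv'_apply] at this
    have h3 : (A * P) i j = A.mulVec (b j) i := by
      simp [Matrix.mul_apply, Matrix.mulVec, dotProduct, hPij]
    rw [h3, h2, Matrix.mul_diagonal, hPij]
    simp [mul_comm]
  have hinv : ((unitOfInvertible P)⁻¹ : GL (Fin n) K) = (⅟P : Matrix (Fin n) (Fin n) K) := rfl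
  calc A = A * (P * ⅟P) := by rw [mul_invOf_self, mul_one]
    _ = A * P * ⅟P := by rw [mul_assoc]
    _ = P * Matrix.diagonal μ * ⅟P := by rw [key]
    _ = _ := by rw [hinv]; rfl

end Aux

/-- If `η ∈ GL(n,ℤ)` is semisimple (diagonalizable over `ℂ`), then every element of the
closure of its `GL(n,ℤ)`-conjugacy class in `GL(n,ℤ_p)` is conjugate to `η` by an element
of `GL(n,ℤ_p)`; in particular every element of the closure is semisimple. -/
theorem closure_conjClass_semisimple {p : ℕ} [Fact p.Prime] {n : ℕ}
    (η : GL (Fin n) ℤ)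
    (hss : Matrix.IsSemisimpleOver (Int.castRingHom ℂ) (η : Matrix (Fin n) (Fin n) ℤ))
    (lam : GL (Fin n) ℤ_[p])
    (hlam : lam ∈ closure
      ((Matrix.GeneralLinearGroup.map (n := Fin n) (Int.castRingHom ℤ_[p])) ''
        {x : GL (Fin n) ℤ | ∃ g : GL (Fin n) ℤ, x = g⁻¹ * η * g})) :
    (∃ β : GL (Fin n) ℤ_[p],
        β⁻¹ * lam * β = Matrix.GeneralLinearGroup.map (n := Fin n) (Int.castRingHom ℤ_[p]) η) ∧
      Matrix.IsSemisimpleOver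
        ((algebraMap ℚ_[p] (AlgebraicClosure ℚ_[p])).comp PadicInt.Coe.ringHom)
        (lam : Matrix (Fin n) (Fin n) ℤ_[p]) := by
  classical
  haveI : CompactSpace (Matrix (Fin n) (Fin n) ℤ_[p]) :=
    inferInstanceAs (CompactSpace (Fin n → Fin n → ℤ_[p]))
  haveI : CompactSpace (GL (Fin n) ℤ_[p]) := aux_units_compactSpace
  set θ : GL (Fin n) ℤ →* GL (Fin n) ℤ_[p] :=
    Matrix.GeneralLinearGroup.map (n := Fin n) (Int.castRingHom ℤ_[p]) with hθ
  set η' : GL (Fin n) ℤ_[p] := θ η with hη'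
  -- Part 1: conjugacy
  have part1 : ∃ β : GL (Fin n) ℤ_[p], β⁻¹ * lam * β = η' := by
    set F : GL (Fin n) ℤ_[p] → GL (Fin n) ℤ_[p] := fun g => g⁻¹ * η' * g with hF
    have hFc : Continuous F := ((continuous_inv.mul continuous_const).mul continuous_id)
    have hrange : IsCompact (Set.range F) := isCompact_range hFc
    have hsub : (θ '' {x : GL (Fin n) ℤ | ∃ g : GL (Fin n) ℤ, x = g⁻¹ * η * g})
        ⊆ Set.range F := by
      rintro _ ⟨x, ⟨g, rfl⟩, rfl⟩
      exact ⟨θ g, by simp [hF, _root_.map_mul, map_inv, hη']⟩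
    have hmem : lam ∈ Set.range F :=
      closure_minimal hsub hrange.isClosed hlam
    obtain ⟨β₀, hβ₀⟩ := hmem
    refine ⟨β₀⁻¹, ?_⟩
    rw [← hβ₀]
    simp only [hF, inv_inv]
    group
  refine ⟨part1, ?_⟩
  -- Part 2: semisimplicity
  obtain ⟨β, hβ⟩ := part1
  set Qbar := AlgebraicClosure ℚ with hQbar
  set Kbar := AlgebraicClosure ℚ_[p] with hKbar
  haveI : Algebra.IsAlgebraic ℚ Qbar := AlgebraicClosure.isAlgebraic ℚ
  have j : Qbar →+* ℂ := (IsAlgClosed.lift (R := ℚ) (M := ℂ)).toRingHom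
  have i : Qbar →+* Kbar := (IsAlgClosed.lift (R := ℚ) (M := Kbar)).toRingHom
  set A₀ : Matrix (Fin n) (Fin n) Qbar :=
    (η : Matrix (Fin n) (Fin n) ℤ).map (Int.castRingHom Qbar) with hA₀
  set χ : Polynomial Qbar := A₀.charpoly with hχ
  set rts : Finset Qbar := χ.roots.toFinset with hrts
  set r : Polynomial Qbar := ∏ c ∈ rts, (X - C c) with hr
  have hmapmap : ∀ {S : Type} [inst : CommRing S] (f : Qbar →+* S),
      A₀.map f = (η : Matrix (Fin n) (Fin n) ℤ).map (Int.castRingHom S) := by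
    intro S inst f
    rw [hA₀, matrix_map_comp,
      Subsingleton.elim (f.comp (Int.castRingHom Qbar)) (Int.castRingHom S)]
  -- the polynomial r annihilates A₀
  have hrA₀ : Polynomial.aeval A₀ r = 0 := by
    obtain ⟨P, d, hPd⟩ := hss
    set Aℂ : Matrix (Fin n) (Fin n) ℂ :=
      (η : Matrix (Fin n) (Fin n) ℤ).map (Int.castRingHom ℂ) with hAℂ
    have hAℂ_eq : Aℂ = A₀.map j := (hmapmap j).symm
    have hcharAℂ : Aℂ.charpoly = χ.map j := by
      rw [hAℂ_eq, Matrix.charpoly_map]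
    have hD : Matrix.diagonal d
        = (↑(P⁻¹) : Matrix (Fin n) (Fin n) ℂ) * Aℂ
          * (↑((P⁻¹)⁻¹) : Matrix (Fin n) (Fin n) ℂ) := by
      rw [inv_inv, hPd]
      exact (units_conj_cancel P _).symm
    have hannD : Polynomial.aeval (Matrix.diagonal d) (χ.map j) = 0 := by
      rw [hD, aeval_units_conj, ← hcharAℂ, Matrix.aeval_self_charpoly]
      simp
    have hroot : ∀ k : Fin n, (χ.map j).eval (d k) = 0 := by
      intro k
      have := congrArg (fun M => M k k) hannD
      simpa [aeval_diagonal] using this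
    have hmem : ∀ k : Fin n, ∃ c ∈ rts, j c = d k := by
      intro k
      have hsplit : χ.Splits := IsAlgClosed.splits χ
      have hmapne : χ.map j ≠ 0 := ((Matrix.charpoly_monic A₀).map j).ne_zero
      have hdk : d k ∈ (χ.map j).roots := by
        rw [Polynomial.mem_roots hmapne]
        exact hroot k
      rw [hsplit.roots_map j, Multiset.mem_map] at hdk
      obtain ⟨c, hc, hjc⟩ := hdk
      exact ⟨c, by simp [hrts, Multiset.mem_toFinset, hc], hjc⟩
    have hrD : Polynomial.aeval (Matrix.diagonal d) (r.map j) = 0 := by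
      rw [aeval_diagonal]
      have hz : ∀ k : Fin n, (r.map j).eval (d k) = 0 := by
        intro k
        obtain ⟨c, hc, hjc⟩ := hmem k
        rw [hr]
        simp only [Polynomial.map_prod, Polynomial.map_sub, Polynomial.map_X, Polynomial.map_C]
        rw [Polynomial.eval_prod]
        refine Finset.prod_eq_zero hc ?_
        simp [hjc]
      simp only [hz]
      simp [Matrix.diagonal_zero]
    have hrAℂ : Polynomial.aeval Aℂ (r.map j) = 0 := by
      rw [hPd, aeval_units_conj, hrD, mul_zero, zero_mul]
    have hmap0 : (Polynomial.aeval A₀ r).map j = 0 := by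
      rw [aeval_matrix_map, ← hAℂ_eq]
      exact hrAℂ
    ext k l
    have := congrArg (fun M => M k l) hmap0
    simp only [Matrix.map_apply, Matrix.zero_apply] at this ⊢
    exact j.injective (by simpa using this)
  -- transfer to Kbar
  set q : Polynomial Kbar := r.map i with hq
  have hq_sf : Squarefree q := by
    have hq_eq : q = ∏ c ∈ rts, (X - C (i c)) := by
      rw [hq, hr]
      simp [Polynomial.map_prod]
    rw [hq_eq]
    have hsep : (∏ c ∈ rts, (X - C (i c))).Separable :=
      Polynomial.separable_prod_X_sub_C_iff'.mpr
        (fun a _ b _ hab => i.injective hab)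
    exact hsep.squarefree
  have hqA : Polynomial.aeval (A₀.map i) q = 0 := by
    rw [hq, ← aeval_matrix_map, hrA₀, Matrix.map_zero _ (map_zero i)]
  set φ : ℤ_[p] →+* Kbar := (algebraMap ℚ_[p] Kbar).comp PadicInt.Coe.ringHom with hφ
  set ψ : GL (Fin n) ℤ_[p] →* GL (Fin n) Kbar :=
    Matrix.GeneralLinearGroup.map (n := Fin n) φ with hψ
  have hlam_eq : lam = β * η' * β⁻¹ := by
    rw [← hβ]
    group
  have hcoe : ∀ g : GL (Fin n) ℤ_[p],
      (↑(ψ g) : Matrix (Fin n) (Fin n) Kbar) = (↑g : Matrix (Fin n) (Fin n) ℤ_[p]).map φ :=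
    fun g => rfl
  have hηK : (↑(ψ η') : Matrix (Fin n) (Fin n) Kbar) = A₀.map i := by
    have h1 : (↑(ψ η') : Matrix (Fin n) (Fin n) Kbar)
        = ((η : Matrix (Fin n) (Fin n) ℤ).map (Int.castRingHom ℤ_[p])).map φ := rfl
    rw [h1, matrix_map_comp,
      Subsingleton.elim (φ.comp (Int.castRingHom ℤ_[p])) (Int.castRingHom Kbar), hmapmap i]
  have hlamK : (lam : Matrix (Fin n) (Fin n) ℤ_[p]).map φ
      = (↑(ψ β) : Matrix (Fin n) (Fin n) Kbar) * (A₀.map i)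
        * (↑((ψ β)⁻¹) : Matrix (Fin n) (Fin n) Kbar) := by
    rw [← hcoe lam]
    have h5 : ψ lam = ψ β * ψ η' * (ψ β)⁻¹ := by
      rw [hlam_eq, _root_.map_mul, _root_.map_mul, map_inv]
    rw [h5, Units.val_mul, Units.val_mul, hηK]
  have hqlam : Polynomial.aeval ((lam : Matrix (Fin n) (Fin n) ℤ_[p]).map φ) q = 0 := by
    rw [hlamK, aeval_units_conj, hqA, mul_zero, zero_mul]
  obtain ⟨P, d, hPd⟩ := diag_of_squarefree _ hq_sf hqlam
  exact ⟨P, d, hPd⟩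
end

section
/- Every element of a torsion-free virtually unipotent subgroup Γ ≤ GL(n, ℤ) has its semisimple Jordan factor γ_s of finite order, and both Jordan factors γ_s, γ_u have entries in ℚ. -/
open Matrix Polynomial Finset

section RingHelpers
variable {R : Type*} [Ring R]

private lemma commute_val {M : Type*} [Monoid M] {a b : Mˣ} (h : Commute a b) :
    Commute (a : M) (b : M) := by
  have h' : ((a * b : Mˣ) : M) = ((b * a : Mˣ) : M) := congrArg Units.val h
  simp only [Units.val_mul] at h'
  exact h'

private lemma unip_mul {a b : R} (hab : Commute a b) (ha : IsNilpotent (a - 1))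
    (hb : IsNilpotent (b - 1)) : IsNilpotent (a * b - 1) := by
  have key : a * b - 1 = a * (b - 1) + (a - 1) := by noncomm_ring
  rw [key]
  have h1 : IsNilpotent (a * (b - 1)) :=
    Commute.isNilpotent_mul_left (hab.sub_right (Commute.one_right a)) hb
  have hc : Commute (a * (b - 1)) (a - 1) := by
    have c1 : Commute a (a - 1) := (Commute.refl a).sub_right (Commute.one_right a)
    have c2 : Commute (b - 1) (a - 1) :=
      (hab.symm.sub_left (Commute.one_left a)).sub_right (Commute.one_right (b - 1))
    exact c1.mul_left c2
  exact Commute.isNilpotent_add hc h1 ha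

private lemma unip_pow {a : R} (ha : IsNilpotent (a - 1)) (k : ℕ) :
    IsNilpotent (a ^ k - 1) := by
  induction k with
  | zero => simp
  | succ k ih =>
    rw [pow_succ]
    exact unip_mul ((Commute.refl a).pow_left k) ih ha

private lemma unip_of_inv {a b : R} (hab : a * b = 1) (hba : b * a = 1)
    (ha : IsNilpotent (a - 1)) : IsNilpotent (b - 1) := by
  have hc : Commute b (a - 1) := by
    have : Commute b a := by
      show b * a = a * b
      rw [hba, hab]
    exact this.sub_right (Commute.one_right b)
  have h1 : IsNilpotent (b * (a - 1)) := Commute.isNilpotent_mul_left hc ha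
  have : b - 1 = -(b * (a - 1)) := by
    rw [mul_sub, mul_one, hba, neg_sub]
  rw [this]
  exact h1.neg

private lemma conj_pow' {u : Rˣ} {x : R} : ∀ m : ℕ, ((u : R) * x * ((u⁻¹ : Rˣ) : R)) ^ m
      = (u : R) * x ^ m * ((u⁻¹ : Rˣ) : R) := by
    intro m
    induction m with
    | zero => simp
    | succ m ih =>
      rw [pow_succ, ih, pow_succ]
      calc (u : R) * x ^ m * ((u⁻¹:Rˣ) : R) * ((u : R) * x * ((u⁻¹:Rˣ) : R))
          = (u : R) * x ^ m * (((u⁻¹:Rˣ) : R) * (u : R)) * x * ((u⁻¹:Rˣ) : R) := by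
            noncomm_ring
        _ = (u : R) * (x ^ m * x) * ((u⁻¹:Rˣ) : R) := by
            rw [Units.inv_mul]; noncomm_ring

private lemma conj_nilpotent {u : Rˣ} {x : R} (hx : IsNilpotent x) :
    IsNilpotent ((u : R) * x * ((u⁻¹ : Rˣ) : R)) := by
  obtain ⟨m, hm⟩ := hx
  exact ⟨m, by rw [conj_pow', hm, mul_zero, zero_mul]⟩

private lemma conj_sub_one {u : Rˣ} {B : R} :
    (u⁻¹ : Rˣ) * ((u : R) * B * (u⁻¹ : Rˣ) - 1) * (u : R) = B - 1 := by
  rw [mul_sub, sub_mul, mul_one]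
  have h1 : ((u⁻¹ : Rˣ) : R) * ((u : R) * B * ((u⁻¹ : Rˣ) : R)) * (u : R)
      = (((u⁻¹ : Rˣ) : R) * (u : R)) * B * (((u⁻¹ : Rˣ) : R) * (u : R)) := by
    noncomm_ring
  rw [h1, Units.inv_mul, one_mul, mul_one]

private lemma commute_eval₂ {A : Type*} [CommSemiring A] (f : A →+* R) {b x : R}
    (hc : ∀ a : A, Commute (f a) b) (hx : Commute x b) (p : A[X]) :
    Commute (eval₂ f x p) b := by
  induction p using Polynomial.induction_on' with
  | add p q hp hq => rw [eval₂_add]; exact hp.add_left hq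
  | monomial n a => rw [eval₂_monomial]; exact (hc a).mul_left (hx.pow_left n)

private lemma natCast_isUnit {S : Type*} [Ring S] [Algebra ℚ S] {k : ℕ} (hk : k ≠ 0) :
    IsUnit (k : S) := by
  have h2 : (k : S) = algebraMap ℚ S (k : ℚ) := (map_natCast (algebraMap ℚ S) k).symm
  rw [h2]
  exact IsUnit.map _ (isUnit_iff_ne_zero.2 (by exact_mod_cast hk))

private lemma pow_eq_one_nilpotent {S : Type*} [Ring S] [Algebra ℚ S] {m : S}
    (hm : IsNilpotent m) {k : ℕ} (hk : k ≠ 0) (h : (1 + m) ^ k = 1) : m = 0 := by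
  obtain ⟨k', rfl⟩ : ∃ k', k = k' + 1 := ⟨k - 1, by omega⟩
  have h1 : (m + 1) ^ (k' + 1) =
      ∑ i ∈ range (k' + 2), m ^ i * 1 ^ (k' + 1 - i) * ((k' + 1).choose i : S) :=
    Commute.add_pow (Commute.one_right m) _
  rw [add_comm 1 m] at h
  rw [h, Finset.sum_range_succ'] at h1
  simp only [one_pow, mul_one, pow_zero, Nat.choose_zero_right, Nat.cast_one, one_mul] at h1
  have h0 : (∑ i ∈ range (k' + 1), m ^ (i + 1) * ((k' + 1).choose (i + 1) : S)) = 0 := by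
    have := h1.symm
    rwa [add_eq_right] at this
  have h2 : m * (∑ i ∈ range (k' + 1), m ^ i * ((k' + 1).choose (i + 1) : S)) = 0 := by
    rw [Finset.mul_sum]
    rw [← h0]
    congr 1; funext i; rw [← mul_assoc, ← pow_succ']
  set u := ∑ i ∈ range (k' + 1), m ^ i * ((k' + 1).choose (i + 1) : S) with hu_def
  have h4 : u = ((k' + 1 : ℕ) : S)
      + m * (∑ i ∈ range k', m ^ i * ((k' + 1).choose (i + 2) : S)) := by
    rw [hu_def, Finset.sum_range_succ', add_comm]
    congr 1
    · simp [Nat.choose_one_right]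
    · rw [Finset.mul_sum]
      refine Finset.sum_congr rfl fun i _ => ?_
      rw [← mul_assoc, ← pow_succ']
  have hcomm : ∀ v ∈ range k', Commute m (m ^ v * ((k' + 1).choose (v + 2) : S)) := by
    intro v _
    exact ((Commute.refl m).pow_right v).mul_right (Nat.cast_commute _ m).symm
  have hnil : IsNilpotent (m * (∑ i ∈ range k', m ^ i * ((k' + 1).choose (i + 2) : S))) :=
    Commute.isNilpotent_mul_right (Commute.sum_right _ _ _ hcomm) hm
  have hu : IsUnit u := by
    rw [h4]
    exact IsNilpotent.isUnit_add_left_of_commute hnil (natCast_isUnit (by omega))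
      (Nat.cast_commute _ _).symm
  obtain ⟨w, hw⟩ := hu
  have : m = m * u * ((w⁻¹ : Sˣ) : S) := by rw [← hw, mul_assoc, Units.mul_inv, mul_one]
  rw [this, h2, zero_mul]

end RingHelpers

private lemma hensel_nilpotent {R : Type*} [CommRing R] [Algebra ℚ R] {N : R} {k t : ℕ}
    (hk : k ≠ 0) (hN : N ^ t = 0) :
    ∃ e : R, IsNilpotent e ∧ (1 + e) ^ k * (1 + N) = 1 := by
  have hNnil : IsNilpotent N := ⟨t, hN⟩
  have key : ∀ m : ℕ, ∃ e r : R, IsNilpotent e ∧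
      (1 + e) ^ k * (1 + N) - 1 = N ^ (m + 1) * r := by
    intro m
    induction m with
    | zero => exact ⟨0, 1, IsNilpotent.zero, by simp⟩
    | succ m ih =>
      obtain ⟨e, r, he, hr⟩ := ih
      set g : R[X] := (1 + X) ^ k * C (1 + N) - 1 with hg_def
      have hge : g.eval e = N ^ (m + 1) * r := by
        simpa [hg_def] using hr
      have hderiv : g.derivative.eval e = (k : R) * (1 + e) ^ (k - 1) * (1 + N) := by
        simp [hg_def, derivative_pow]
      have hdu : IsUnit (g.derivative.eval e) := by
        rw [hderiv]
        exact ((natCast_isUnit hk).mul (he.isUnit_one_add.pow _)).mul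
          hNnil.isUnit_one_add
      obtain ⟨w, hw⟩ := hdu.exists_right_inv
      set h : R := -(g.eval e * w) with hh_def
      have hNm : IsNilpotent (N ^ (m + 1)) := hNnil.pow_of_pos (by omega)
      have hhn : IsNilpotent h := by
        rw [hh_def, hge, mul_assoc]
        exact (Commute.isNilpotent_mul_right (Commute.all _ _) hNm).neg
      obtain ⟨c, hc⟩ := g.binomExpansion e h
      refine ⟨e + h, N ^ m * (r * w) ^ 2 * c, (Commute.all _ _).isNilpotent_add he hhn, ?_⟩
      have hmain : g.eval (e + h) = c * h ^ 2 := by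
        rw [hc, hh_def]
        have : g.derivative.eval e * -(g.eval e * w)
            = -(g.eval e * (g.derivative.eval e * w)) := by ring
        rw [this, hw, mul_one]
        ring
      have hexp : g.eval (e + h) = (1 + (e + h)) ^ k * (1 + N) - 1 := by
        simp [hg_def]
      have key2 : c * h ^ 2 = N ^ (m + 1 + 1) * (N ^ m * (r * w) ^ 2 * c) := by
        have hNe : (N ^ (m + 1)) ^ 2 = N ^ (m + 1 + 1) * N ^ m := by
          rw [← pow_mul, ← pow_add]; congr 1; ring
        rw [hh_def, hge]
        calc c * (-(N ^ (m + 1) * r * w)) ^ 2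
            = (N ^ (m + 1)) ^ 2 * ((r * w) ^ 2 * c) := by ring
          _ = N ^ (m + 1 + 1) * (N ^ m * (r * w) ^ 2 * c) := by rw [hNe]; ring
      rw [← hexp, hmain, key2]
  obtain ⟨e, r, he, hr⟩ := key t
  refine ⟨e, he, ?_⟩
  have : N ^ (t + 1) = 0 := by rw [pow_succ, hN, zero_mul]
  rw [this, zero_mul, sub_eq_zero] at hr
  exact hr

def Matrix.IsUnipotent {n : ℕ} {R : Type*} [CommRing R] (A : Matrix (Fin n) (Fin n) R) : Prop :=
  IsNilpotent (A - 1)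

def Subgroup.IsVirtuallyUnipotent {n : ℕ} (Γ : Subgroup (GL (Fin n) ℤ)) : Prop :=
  ∃ H : Subgroup (GL (Fin n) ℤ), H ≤ Γ ∧ H.relIndex Γ ≠ 0 ∧
    ∃ P : GL (Fin n) ℂ, ∀ h ∈ H,
      (((P⁻¹ : GL (Fin n) ℂ) : Matrix (Fin n) (Fin n) ℂ) *
          ((h : Matrix (Fin n) (Fin n) ℤ).map (Int.cast : ℤ → ℂ)) *
          (P : Matrix (Fin n) (Fin n) ℂ)).BlockTriangular (id : Fin n → Fin n) ∧
      ∀ i : Fin n,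
        (((P⁻¹ : GL (Fin n) ℂ) : Matrix (Fin n) (Fin n) ℂ) *
          ((h : Matrix (Fin n) (Fin n) ℤ).map (Int.cast : ℤ → ℂ)) *
          (P : Matrix (Fin n) (Fin n) ℂ)) i i = 1

/-- For `γ` in a torsion-free virtually unipotent subgroup of `GL(n,ℤ)`, the semisimple
Jordan factor `γ_s` has finite order, and both Jordan factors have rational entries. -/
theorem jordan_factors_of_virtually_unipotent {n : ℕ}
    (Γ : Subgroup (GL (Fin n) ℤ))
    (htf : ∀ g ∈ Γ, IsOfFinOrder g → g = 1)
    (hvu : Γ.IsVirtuallyUnipotent)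
    (γ : GL (Fin n) ℤ) (hγ : γ ∈ Γ)
    (γs γu : GL (Fin n) ℂ)
    (hdec : Matrix.GeneralLinearGroup.map (n := Fin n) (Int.castRingHom ℂ) γ = γs * γu)
    (hs : Matrix.IsSemisimpleOver (RingHom.id ℂ) (γs : Matrix (Fin n) (Fin n) ℂ))
    (hu : Matrix.IsUnipotent (γu : Matrix (Fin n) (Fin n) ℂ))
    (hcomm : Commute γs γu) :
    IsOfFinOrder γs ∧
      (∀ i j : Fin n, ∃ q : ℚ, (γs : Matrix (Fin n) (Fin n) ℂ) i j = (q : ℂ)) ∧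
      (∀ i j : Fin n, ∃ q : ℚ, (γu : Matrix (Fin n) (Fin n) ℂ) i j = (q : ℂ)) := by
  classical
  obtain ⟨H, hHΓ, hrel, P, hP⟩ := hvu
  obtain ⟨k, hk0, -, hkmem⟩ := Subgroup.exists_pow_mem_of_relIndex_ne_zero hrel hγ
  have hkH : γ ^ k ∈ H := hkmem.1
  have hkne : k ≠ 0 := hk0.ne'
  -- matrices
  set Sm : Matrix (Fin n) (Fin n) ℂ := (γs : Matrix (Fin n) (Fin n) ℂ) with hSm_def
  set Um : Matrix (Fin n) (Fin n) ℂ := (γu : Matrix (Fin n) (Fin n) ℂ) with hUm_def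
  set Sm' : Matrix (Fin n) (Fin n) ℂ := ((γs⁻¹ : GL (Fin n) ℂ) : Matrix (Fin n) (Fin n) ℂ)
    with hSm'_def
  set Aℂ : Matrix (Fin n) (Fin n) ℂ :=
    ((γ : Matrix (Fin n) (Fin n) ℤ).map (Int.cast : ℤ → ℂ)) with hAc_def
  have hA : Aℂ = Sm * Um := by
    have := congrArg Units.val hdec
    simpa [Matrix.GeneralLinearGroup.map, Units.val_mul, RingHom.mapMatrix_apply] using this
  -- γ ℂ as a unit
  set γℂ : GL (Fin n) ℂ := Matrix.GeneralLinearGroup.map (Int.castRingHom ℂ) γ with hγℂ_def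
  have hγℂval : (γℂ : Matrix (Fin n) (Fin n) ℂ) = Aℂ := by
    simp [hγℂ_def, Matrix.GeneralLinearGroup.map, RingHom.mapMatrix_apply, hAc_def]
  -- step 2 : Aℂ ^ k - 1 nilpotent
  have hT : IsNilpotent (Aℂ ^ k - 1) := by
    obtain ⟨hTb, hTd⟩ := hP (γ ^ k) hkH
    set M : Matrix (Fin n) (Fin n) ℂ :=
      ((γ ^ k : GL (Fin n) ℤ) : Matrix (Fin n) (Fin n) ℤ).map (Int.cast : ℤ → ℂ) with hM_def
    set T : Matrix (Fin n) (Fin n) ℂ :=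
      ((P⁻¹ : GL (Fin n) ℂ) : Matrix (Fin n) (Fin n) ℂ) * M *
        (P : Matrix (Fin n) (Fin n) ℂ) with hT_def
    have hchar : T.charpoly = (X - 1) ^ n := by
      rw [Matrix.charpoly_of_upperTriangular T hTb]
      have heq : ∀ i : Fin n, (X - C (T i i)) = (X - 1 : ℂ[X]) := by
        intro i; rw [hTd i]; simp
      rw [Finset.prod_congr rfl (fun i _ => heq i)]
      simp [Finset.prod_const, Finset.card_univ]
    have h0 : (T - 1) ^ n = 0 := by
      have hch := T.aeval_self_charpoly
      rw [hchar] at hch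
      simpa [map_pow, map_sub, aeval_X, _root_.map_one] using hch
    have hMA : M = Aℂ ^ k := by
      rw [hM_def, hAc_def]
      rw [Units.val_pow_eq_pow_val]
      have := map_pow ((Int.castRingHom ℂ).mapMatrix) (γ : Matrix (Fin n) (Fin n) ℤ) k
      simpa [RingHom.mapMatrix_apply] using this
    have hconj : Aℂ ^ k = (P : Matrix (Fin n) (Fin n) ℂ) * T *
        ((P⁻¹ : GL (Fin n) ℂ) : Matrix (Fin n) (Fin n) ℂ) := by
      rw [hT_def, ← hMA]
      calc M = 1 * M * 1 := by rw [one_mul, mul_one]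
        _ = ((P : Matrix (Fin n) (Fin n) ℂ) * ((P⁻¹ : GL (Fin n) ℂ) : Matrix (Fin n) (Fin n) ℂ))
              * M * ((P : Matrix (Fin n) (Fin n) ℂ) *
                ((P⁻¹ : GL (Fin n) ℂ) : Matrix (Fin n) (Fin n) ℂ)) := by
            rw [Units.mul_inv]
        _ = (P : Matrix (Fin n) (Fin n) ℂ) * (((P⁻¹ : GL (Fin n) ℂ) : Matrix (Fin n) (Fin n) ℂ)
              * M * (P : Matrix (Fin n) (Fin n) ℂ)) *
                ((P⁻¹ : GL (Fin n) ℂ) : Matrix (Fin n) (Fin n) ℂ) := by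
            noncomm_ring
    have hfin : Aℂ ^ k - 1 = (P : Matrix (Fin n) (Fin n) ℂ) * (T - 1) *
        ((P⁻¹ : GL (Fin n) ℂ) : Matrix (Fin n) (Fin n) ℂ) := by
      rw [hconj, mul_sub, sub_mul, mul_one, Units.mul_inv]
    rw [hfin]
    exact conj_nilpotent ⟨n, h0⟩
  -- commutation facts
  have hγsγ : Commute γℂ γs := by
    rw [hdec]; exact Commute.mul_left (Commute.refl γs) hcomm.symm
  have hγuγ : Commute γℂ γu := by
    rw [hdec]; exact Commute.mul_left hcomm (Commute.refl γu)
  have cSU : Commute Sm Um := commute_val hcomm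
  have cAS : Commute Aℂ Sm := by rw [← hγℂval]; exact commute_val hγsγ
  have cAU : Commute Aℂ Um := by rw [← hγℂval]; exact commute_val hγuγ
  have cAS' : Commute Aℂ Sm' := by rw [← hγℂval]; exact commute_val hγsγ.inv_right
  have cUS' : Commute Um Sm' := commute_val hcomm.symm.inv_right
  have hSS' : Sm * Sm' = 1 := by
    rw [hSm_def, hSm'_def, ← Units.val_mul, mul_inv_cancel, Units.val_one]
  have hS'S : Sm' * Sm = 1 := by
    rw [hSm_def, hSm'_def, ← Units.val_mul, inv_mul_cancel, Units.val_one]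
  set W : Matrix (Fin n) (Fin n) ℂ := ((γu⁻¹ : GL (Fin n) ℂ) : Matrix (Fin n) (Fin n) ℂ)
    with hW_def
  have hUW : Um * W = 1 := by
    rw [hUm_def, hW_def, ← Units.val_mul, mul_inv_cancel, Units.val_one]
  have hWU : W * Um = 1 := by
    rw [hUm_def, hW_def, ← Units.val_mul, inv_mul_cancel, Units.val_one]
  have hu' : IsNilpotent (Um - 1) := hu
  have hWnil : IsNilpotent (W - 1) := unip_of_inv hUW hWU hu'
  have cAW : Commute Aℂ W := by rw [← hγℂval]; exact commute_val hγuγ.inv_right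
  -- Sm ^ k - 1 nilpotent
  have hSmk : Sm ^ k = Aℂ ^ k * W ^ k := by
    have h1 : Aℂ ^ k = Sm ^ k * Um ^ k := by rw [hA, cSU.mul_pow]
    have h2 : Um ^ k * W ^ k = 1 := by
      have hv : ((γu ^ k * γu⁻¹ ^ k : GL (Fin n) ℂ) : Matrix (Fin n) (Fin n) ℂ) = 1 := by
        rw [inv_pow, mul_inv_cancel, Units.val_one]
      rw [Units.val_mul, Units.val_pow_eq_pow_val, Units.val_pow_eq_pow_val] at hv
      exact hv
    rw [h1, mul_assoc, h2, mul_one]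
  have hSknil : IsNilpotent (Sm ^ k - 1) := by
    rw [hSmk]
    exact unip_mul (cAW.pow_pow k k) hT (unip_pow hWnil k)
  -- semisimplicity : Sm ^ k = 1
  obtain ⟨Q, d, hQ⟩ := hs
  have hQ' : Sm = (Q : Matrix (Fin n) (Fin n) ℂ) * diagonal d *
      ((Q⁻¹ : GL (Fin n) ℂ) : Matrix (Fin n) (Fin n) ℂ) := by
    rw [hSm_def]
    rw [show ((γs : Matrix (Fin n) (Fin n) ℂ).map (RingHom.id ℂ))
      = (γs : Matrix (Fin n) (Fin n) ℂ) from by ext i j; simp] at hQ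
    exact hQ
  have hSmk_eq_one : Sm ^ k = 1 := by
    have hpow : Sm ^ k = (Q : Matrix (Fin n) (Fin n) ℂ) * (diagonal d) ^ k *
        ((Q⁻¹ : GL (Fin n) ℂ) : Matrix (Fin n) (Fin n) ℂ) := by
      rw [hQ', conj_pow']
    have hdiagnil : IsNilpotent ((diagonal d) ^ k - 1) := by
      have hback : (diagonal d) ^ k - 1 =
          ((Q⁻¹ : GL (Fin n) ℂ) : Matrix (Fin n) (Fin n) ℂ) * (Sm ^ k - 1) *
            (((Q⁻¹)⁻¹ : GL (Fin n) ℂ) : Matrix (Fin n) (Fin n) ℂ) := by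
        rw [inv_inv, hpow, conj_sub_one]
      rw [hback]
      exact conj_nilpotent hSknil
    have hd : ∀ i, d i ^ k = 1 := by
      intro i
      obtain ⟨m, hm⟩ := hdiagnil
      have hdd : (diagonal d) ^ k - 1 = diagonal (fun j => d j ^ k - 1) := by
        rw [diagonal_pow, ← diagonal_one, diagonal_sub]
        rfl
      rw [hdd, diagonal_pow] at hm
      have h1 : (d i ^ k - 1) ^ m = 0 := by
        have h2 := congrArg (fun (B : Matrix (Fin n) (Fin n) ℂ) => B i i) hm
        simpa [Matrix.diagonal_apply_eq] using h2
      rcases Nat.eq_zero_or_pos m with hm0 | hmpos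
      · subst hm0; simp at h1
      · have := pow_eq_zero_iff hmpos.ne' |>.mp h1
        linear_combination this
    have hdiag_one : diagonal (fun i => d i ^ k) = (1 : Matrix (Fin n) (Fin n) ℂ) := by
      rw [show (fun i => d i ^ k) = fun _ => (1 : ℂ) from funext hd, diagonal_one]
    rw [hpow, diagonal_pow]
    rw [show (d ^ k) = fun i => d i ^ k from rfl, hdiag_one, mul_one, Units.mul_inv]
  have hγsk : γs ^ k = 1 :=
    Units.ext (by rw [Units.val_pow_eq_pow_val, Units.val_one]; exact hSmk_eq_one)
  have hfin : IsOfFinOrder γs := isOfFinOrder_iff_pow_eq_one.mpr ⟨k, hk0, hγsk⟩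
  -- rationality
  set ψ : Matrix (Fin n) (Fin n) ℚ →+* Matrix (Fin n) (Fin n) ℂ :=
    (algebraMap ℚ ℂ : ℚ →+* ℂ).mapMatrix with hψ_def
  set Aq : Matrix (Fin n) (Fin n) ℚ := (γ : Matrix (Fin n) (Fin n) ℤ).map
    (Int.cast : ℤ → ℚ) with hAq_def
  have hψA : ψ Aq = Aℂ := by
    rw [hψ_def, hAq_def, hAc_def]
    ext i j
    simp [RingHom.mapMatrix_apply, Matrix.map_apply, Matrix.map_map]
  have hψinj : Function.Injective ψ := by
    intro M N hMN
    ext i j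
    have h2 := congrArg (fun (B : Matrix (Fin n) (Fin n) ℂ) => B i j) hMN
    simp only [hψ_def, RingHom.mapMatrix_apply, Matrix.map_apply] at h2
    exact (algebraMap ℚ ℂ).injective h2
  obtain ⟨t, ht⟩ := hT
  have hNq : ((Aq ^ k - 1) : Matrix (Fin n) (Fin n) ℚ) ^ t = 0 := by
    apply hψinj
    rw [_root_.map_pow, _root_.map_sub, _root_.map_pow, hψA, _root_.map_one, ht, _root_.map_zero]
  set I : Ideal (Polynomial ℚ) := Ideal.span {((X : Polynomial ℚ) ^ k - 1) ^ t} with hI_def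
  set x : Polynomial ℚ ⧸ I := Ideal.Quotient.mk I X with hx_def
  have hxN : (x ^ k - 1) ^ t = 0 := by
    rw [hx_def, ← map_pow, ← _root_.map_one (Ideal.Quotient.mk I), ← map_sub, ← map_pow]
    rw [Ideal.Quotient.eq_zero_iff_mem]
    exact Ideal.subset_span rfl
  obtain ⟨e, he, hek⟩ := hensel_nilpotent hkne hxN
  have hker : ∀ a ∈ I, (aeval Aq : Polynomial ℚ →ₐ[ℚ] Matrix (Fin n) (Fin n) ℚ) a = 0 := by
    intro a ha
    rw [hI_def, Ideal.mem_span_singleton] at ha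
    obtain ⟨c, rfl⟩ := ha
    rw [_root_.map_mul]
    have : (aeval Aq : Polynomial ℚ →ₐ[ℚ] Matrix (Fin n) (Fin n) ℚ)
        (((X : Polynomial ℚ) ^ k - 1) ^ t) = 0 := by
      rw [_root_.map_pow, _root_.map_sub, _root_.map_pow, aeval_X, _root_.map_one, hNq]
    rw [this, zero_mul]
  set φ : Polynomial ℚ ⧸ I →+* Matrix (Fin n) (Fin n) ℚ :=
    Ideal.Quotient.lift I (aeval Aq : Polynomial ℚ →ₐ[ℚ] Matrix (Fin n) (Fin n) ℚ).toRingHom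
      hker with hφ_def
  have hφmk : ∀ p : Polynomial ℚ, φ (Ideal.Quotient.mk I p) = aeval Aq p := by
    intro p
    rw [hφ_def]
    exact Ideal.Quotient.lift_mk I _ _
  set s : Polynomial ℚ ⧸ I := x * (1 + e) with hs_def
  have hsk : s ^ k = 1 := by
    rw [hs_def, mul_pow]
    have hxk : x ^ k = 1 + (x ^ k - 1) := by ring
    rw [hxk, mul_comm]
    exact hek
  have hsx : IsNilpotent (s - x) := by
    have heq : s - x = x * e := by rw [hs_def]; ring
    rw [heq]
    exact Commute.isNilpotent_mul_left (Commute.all _ _) he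
  obtain ⟨q, hq⟩ := Ideal.Quotient.mk_surjective s
  set Sq : Matrix (Fin n) (Fin n) ℚ := φ s with hSq_def
  set Sc : Matrix (Fin n) (Fin n) ℂ := ψ Sq with hSc_def
  have hφx : φ x = Aq := by rw [hx_def, hφmk, aeval_X]
  have hSqk : Sq ^ k = 1 := by rw [hSq_def, ← _root_.map_pow, hsk, _root_.map_one]
  have hSck : Sc ^ k = 1 := by rw [hSc_def, ← _root_.map_pow, hSqk, _root_.map_one]
  have hScA : IsNilpotent (Sc - Aℂ) := by
    have heq : Sc - Aℂ = ψ (φ (s - x)) := by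
      rw [_root_.map_sub, _root_.map_sub, hφx, hψA, hSc_def, hSq_def]
    rw [heq]
    exact (hsx.map φ).map ψ
  have hSc_eval : Sc = eval₂ (ψ.comp (algebraMap ℚ (Matrix (Fin n) (Fin n) ℚ))) Aℂ q := by
    rw [hSc_def, hSq_def, ← hq, hφmk, aeval_def, hom_eval₂, hψA]
  have hscal : ∀ (a : ℚ) (B : Matrix (Fin n) (Fin n) ℂ),
      Commute ((ψ.comp (algebraMap ℚ (Matrix (Fin n) (Fin n) ℚ))) a) B := by
    intro a B
    have heq : (ψ.comp (algebraMap ℚ (Matrix (Fin n) (Fin n) ℚ))) a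
        = algebraMap ℚ (Matrix (Fin n) (Fin n) ℂ) a := by
      rw [Subsingleton.elim (ψ.comp (algebraMap ℚ (Matrix (Fin n) (Fin n) ℚ)))
        (algebraMap ℚ (Matrix (Fin n) (Fin n) ℂ))]
    rw [heq]
    exact Algebra.commute_algebraMap_left a B
  have cScS : Commute Sc Sm := by
    rw [hSc_eval]; exact commute_eval₂ _ (fun a => hscal a Sm) cAS q
  have cScS' : Commute Sc Sm' := by
    rw [hSc_eval]; exact commute_eval₂ _ (fun a => hscal a Sm') cAS' q
  have cScU : Commute Sc Um := by
    rw [hSc_eval]; exact commute_eval₂ _ (fun a => hscal a Um) cAU q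
  -- E = Sm' * Sc equals 1
  set E : Matrix (Fin n) (Fin n) ℂ := Sm' * Sc with hE_def
  have cS'Sc : Commute Sm' Sc := cScS'.symm
  have hSm'k : Sm' ^ k = 1 := by
    have hv : ((γs⁻¹ ^ k : GL (Fin n) ℂ) : Matrix (Fin n) (Fin n) ℂ) = 1 := by
      rw [inv_pow, hγsk, inv_one, Units.val_one]
    rw [Units.val_pow_eq_pow_val] at hv
    exact hv
  have hEk : E ^ k = 1 := by
    rw [hE_def, cS'Sc.mul_pow, hSm'k, hSck, one_mul]
  have hEnil : IsNilpotent (E - 1) := by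
    have h1 : Sm' * Aℂ = Um := by rw [hA, ← mul_assoc, hS'S, one_mul]
    have hdecomp : E - 1 = (Um - 1) + Sm' * (Sc - Aℂ) := by
      rw [hE_def, ← h1]
      noncomm_ring
    rw [hdecomp]
    have hn2 : IsNilpotent (Sm' * (Sc - Aℂ)) :=
      Commute.isNilpotent_mul_left (cS'Sc.sub_right cAS'.symm) hScA
    have c1 : Commute (Um - 1) Sm' := cUS'.sub_left (Commute.one_left Sm')
    have c2 : Commute (Um - 1) (Sc - Aℂ) :=
      (cScU.symm.sub_right cAU.symm).sub_left (Commute.one_left _)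
    exact Commute.isNilpotent_add (c1.mul_right c2) hu' hn2
  have hE1 : E = 1 := by
    have hEpow : (1 + (E - 1)) ^ k = 1 := by
      rw [show (1 : Matrix (Fin n) (Fin n) ℂ) + (E - 1) = E from by abel, hEk]
    have := pow_eq_one_nilpotent hEnil hkne hEpow
    rw [sub_eq_zero] at this
    exact this
  have hSm_eq : Sm = Sc := by
    have h2 : Sm * E = Sc := by rw [hE_def, ← mul_assoc, hSS', one_mul]
    rw [← h2, hE1, mul_one]
  refine ⟨hfin, ?_, ?_⟩
  · intro i j
    refine ⟨Sq i j, ?_⟩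
    have h2 : Sm i j = ψ Sq i j := by rw [hSm_eq, hSc_def]
    rw [h2]
    simp only [hψ_def, RingHom.mapMatrix_apply, Matrix.map_apply]
    exact eq_ratCast (algebraMap ℚ ℂ) _
  · intro i j
    have hSm'' : Sm' = Sm ^ (k - 1) := by
      have h1 : Sm * Sm ^ (k - 1) = 1 := by
        rw [← pow_succ', show k - 1 + 1 = k from by omega, hSmk_eq_one]
      calc Sm' = Sm' * (Sm * Sm ^ (k - 1)) := by rw [h1, mul_one]
        _ = (Sm' * Sm) * Sm ^ (k - 1) := by rw [mul_assoc]
        _ = Sm ^ (k - 1) := by rw [hS'S, one_mul]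
    have hUm_eq : Um = ψ (Sq ^ (k - 1) * Aq) := by
      have h1 : Um = Sm' * Aℂ := by rw [hA, ← mul_assoc, hS'S, one_mul]
      rw [h1, hSm'', hSm_eq, hSc_def, ← hψA, ← _root_.map_pow, ← _root_.map_mul]
    refine ⟨(Sq ^ (k - 1) * Aq) i j, ?_⟩
    rw [show Um i j = ψ (Sq ^ (k - 1) * Aq) i j from by rw [hUm_eq]]
    simp only [hψ_def, RingHom.mapMatrix_apply, Matrix.map_apply]
    exact eq_ratCast (algebraMap ℚ ℂ) _
end

section
/- Let Γ be a crystallographic group, realized as a subgroup of ℝ^m ⋊ GL(m, ℤ) with translation lattice Γ_u ≅ ℤ^m of finite index and finite holonomy group θ. Then the set of semisimple factors {γ_s : γ ∈ Γ} (under Jordan decomposition of the affine action) is finite up to conjugation by elements of Γ_u. -/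
open Matrix

/-- The group of affine self-equivalences of `ℚ^m`. -/
abbrev AffQ (m : ℕ) := (Fin m → ℚ) ≃ᵃ[ℚ] (Fin m → ℚ)

section Aux

/-- The subring of integers in `ℚ`. -/
noncomputable abbrev ZRq : Subring ℚ := (Int.castRingHom ℚ).range

lemma affq_eval {m} (f : AffQ m) (x : Fin m → ℚ) : f x = f.linear x + f 0 := by
  have := f.toAffineMap.map_vadd 0 x
  simpa [vadd_eq_add] using this

lemma affq_ext {m} {f g : AffQ m} (h1 : f.linear = g.linear) (h2 : f 0 = g 0) : f = g := by
  refine AffineEquiv.ext fun x => ?_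
  calc f x = f.linear x + f 0 := affq_eval f x
  _ = g.linear x + g 0 := by rw [h1, h2]
  _ = g x := (affq_eval g x).symm

lemma affq_conj_eval {m} (s : AffQ m) (v : Fin m → ℚ) :
    ((AffineEquiv.constVAdd ℚ (Fin m → ℚ) v)⁻¹ * s * (AffineEquiv.constVAdd ℚ (Fin m → ℚ) v)) 0
      = s.linear v + s 0 - v := by
  have h1 : ((AffineEquiv.constVAdd ℚ (Fin m → ℚ) v)⁻¹ * s *
      (AffineEquiv.constVAdd ℚ (Fin m → ℚ) v)) 0
      = (AffineEquiv.constVAdd ℚ (Fin m → ℚ) v)⁻¹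
          (s ((AffineEquiv.constVAdd ℚ (Fin m → ℚ) v) 0)) := rfl
  rw [h1, AffineEquiv.inv_def, AffineEquiv.constVAdd_symm]
  have h2 : (AffineEquiv.constVAdd ℚ (Fin m → ℚ) v) 0 = v := by
    simp [AffineEquiv.constVAdd_apply]
  rw [h2, affq_eval s v]
  simp [AffineEquiv.constVAdd_apply, sub_eq_add_neg, add_comm]

lemma affq_conj_linear {m} (s : AffQ m) (v : Fin m → ℚ) :
    ((AffineEquiv.constVAdd ℚ (Fin m → ℚ) v)⁻¹ * s *
      (AffineEquiv.constVAdd ℚ (Fin m → ℚ) v)).linear = s.linear := by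
  have hmul : ∀ f g : AffQ m, (f * g).linear = f.linear * g.linear := fun f g => rfl
  rw [hmul, hmul]
  have hc : ∀ w, (AffineEquiv.constVAdd ℚ (Fin m → ℚ) w).linear = 1 := fun w => rfl
  rw [AffineEquiv.inv_def, AffineEquiv.constVAdd_symm, hc, hc, one_mul, mul_one]

lemma pow_sub_eq_one' {G} [Group G] {S : G} {a b : ℕ} (h : a < b) (he : S ^ a = S ^ b) :
    S ^ (b - a) = 1 := by
  have h2 : S ^ a * S ^ (b - a) = S ^ a * 1 := by
    rw [mul_one, ← pow_add, Nat.add_sub_cancel' h.le, he]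
  exact mul_left_cancel h2

lemma intmat_preserves {m : ℕ} (T : (Fin m → ℚ) →ₗ[ℚ] (Fin m → ℚ))
    (hT : ∀ i j, LinearMap.toMatrix' T i j ∈ ZRq)
    (x : Fin m → ℚ) (hx : ∀ i, x i ∈ ZRq) : ∀ i, T x i ∈ ZRq := by
  intro i
  have h1 : T x = (LinearMap.toMatrix' T).mulVec x := by
    conv_lhs => rw [← Matrix.toLin'_toMatrix' T]
    exact Matrix.toLin'_apply _ _
  rw [h1]
  simp only [Matrix.mulVec, dotProduct]
  exact Subring.sum_mem _ fun j _ => mul_mem (hT i j) (hx j)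

lemma key_identity {m : ℕ} (Sl D : (Fin m → ℚ) →ₗ[ℚ] (Fin m → ℚ))
    (hD : D = Sl - LinearMap.id) (n : ℕ) (hSn : ∀ x, (Sl ^ n) x = x)
    (A t y : Fin m → ℚ) (hy : D y = t) (hker : D (A - t) = 0) :
    (n : ℚ) • t = ∑ k ∈ Finset.range n, (A - (Sl ^ k) A) := by
  have hfix : Sl (A - t) = A - t := by
    have h := hker
    rw [hD] at h
    simpa [LinearMap.sub_apply, sub_eq_zero] using h
  have hfixk : ∀ k : ℕ, (Sl ^ k) (A - t) = A - t := by
    intro k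
    induction k with
    | zero => simp
    | succ j ih => rw [pow_succ, Module.End.mul_apply, hfix, ih]
  have htel : ∑ k ∈ Finset.range n, (Sl ^ k) t = 0 := by
    have hterm : ∀ k : ℕ, (Sl ^ k) t = (Sl ^ (k+1)) y - (Sl ^ k) y := by
      intro k
      rw [← hy, hD]
      simp only [LinearMap.sub_apply, LinearMap.id_apply, map_sub]
      rw [← Module.End.mul_apply, ← pow_succ]
    rw [Finset.sum_congr rfl fun k _ => hterm k, Finset.sum_range_sub (fun k => (Sl ^ k) y)]
    simp [hSn y]
  have hsplit : ∀ k : ℕ, (Sl ^ k) A = (Sl ^ k) t + (A - t) := by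
    intro k
    rw [← hfixk k, ← map_add]
    congr 1; abel
  calc (n : ℚ) • t = n • t := by rw [Nat.cast_smul_eq_nsmul]
  _ = ∑ k ∈ Finset.range n, (A - (Sl ^ k) A) := by
      rw [Finset.sum_congr rfl fun k (_ : k ∈ Finset.range n) => by rw [hsplit k]]
      rw [Finset.sum_sub_distrib]
      rw [Finset.sum_add_distrib, htel, zero_add, Finset.sum_const, Finset.sum_const,
        Finset.card_range]
      rw [smul_sub]
      abel

lemma mem_span_denoms {m n : ℕ} (hn : 0 < n) (x : Fin m → ℚ)
    (hx : ∀ i, (n : ℚ) * x i ∈ ZRq) :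
    x ∈ Submodule.span ℤ
      (Set.range fun i : Fin m => ((n : ℚ)⁻¹ • (Pi.single i (1 : ℚ) : Fin m → ℚ))) := by
  have hne : (n : ℚ) ≠ 0 := Nat.cast_ne_zero.mpr hn.ne'
  choose k hk using hx
  have hxeq : x = ∑ i : Fin m, (k i) • ((n : ℚ)⁻¹ • (Pi.single i (1 : ℚ) : Fin m → ℚ)) := by
    funext j
    rw [Finset.sum_apply]
    rw [Finset.sum_eq_single j]
    · simp only [Pi.smul_apply, Pi.single_eq_same, smul_eq_mul, zsmul_eq_mul]
      field_simp
      simpa [mul_comm] using (hk j).symm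
    · intro i _ hij
      simp [Pi.single_eq_of_ne (Ne.symm hij)]
    · intro h; exact absurd (Finset.mem_univ j) h
  rw [hxeq]
  exact Submodule.sum_mem _ fun i _ =>
    Submodule.smul_mem _ (k i) (Submodule.subset_span ⟨i, rfl⟩)

lemma exists_int_smul_mem_of_mem_span {M : Type*} [AddCommGroup M] [Module ℚ M]
    (N : Submodule ℤ M) (s : Set M) (hs : s ⊆ (N : Set M)) :
    ∀ x ∈ Submodule.span ℚ s, ∃ k : ℤ, k ≠ 0 ∧ (k : ℚ) • x ∈ N := by
  intro x hx
  induction hx using Submodule.span_induction with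
  | mem z hz => exact ⟨1, one_ne_zero, by simpa using hs hz⟩
  | zero => exact ⟨1, one_ne_zero, by simp⟩
  | add x y hx hy ihx ihy =>
    obtain ⟨k1, hk1, hm1⟩ := ihx
    obtain ⟨k2, hk2, hm2⟩ := ihy
    refine ⟨k1 * k2, mul_ne_zero hk1 hk2, ?_⟩
    rw [smul_add]
    have e1 : ((k1 * k2 : ℤ) : ℚ) • x = k2 • ((k1 : ℚ) • x) := by
      rw [Int.cast_smul_eq_zsmul ℚ, mul_comm, mul_smul, Int.cast_smul_eq_zsmul ℚ]
    have e2 : ((k1 * k2 : ℤ) : ℚ) • y = k1 • ((k2 : ℚ) • y) := by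
      rw [Int.cast_smul_eq_zsmul ℚ, mul_smul, Int.cast_smul_eq_zsmul ℚ]
    rw [e1, e2]
    exact N.add_mem (N.smul_mem k2 hm1) (N.smul_mem k1 hm2)
  | smul q x hx ihx =>
    obtain ⟨k, hk, hm⟩ := ihx
    refine ⟨(q.den : ℤ) * k, mul_ne_zero (Int.natCast_ne_zero.mpr q.den_nz) hk, ?_⟩
    have e : (((q.den : ℤ) * k : ℤ) : ℚ) • (q • x) = q.num • ((k : ℚ) • x) := by
      rw [← smul_assoc]
      push_cast
      rw [smul_eq_mul]
      rw [show (q.den : ℚ) * (k : ℚ) * q = (q.num : ℚ) * k by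
        rw [mul_comm ((q.den : ℚ)) (k : ℚ), mul_assoc, Rat.den_mul_eq_num, mul_comm]]
      rw [mul_smul, Int.cast_smul_eq_zsmul ℚ]
    rw [e]
    exact N.smul_mem q.num hm

end Aux

/-- Let `Γ` be a crystallographic group, realized as a group of affine transformations of
`ℚ^m` with integral translation and linear parts, translation lattice `Γu` of finite
index (spanning `ℚ^m`) and finite holonomy. If `sfac` assigns to each `g ∈ Γ` its
semisimple Jordan factor (same linear part; translation part in `im(S - I)`, the
complement of the fixed space `ker(S - I)`), then the set of semisimple factors of
elements of `Γ` is finite up to conjugation by elements of `Γu`. -/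
theorem crystallographic_semisimple_factors_finite {m : ℕ}
    (Γ Γu : Subgroup (AffQ m))
    (hΓu : ∀ g, g ∈ Γu ↔ g ∈ Γ ∧ g.linear = LinearEquiv.refl ℚ (Fin m → ℚ))
    (hfinindex : Γu.relIndex Γ ≠ 0)
    (hhol : Set.Finite ((fun g : AffQ m => g.linear) '' (Γ : Set (AffQ m))))
    (hintegral : ∀ g ∈ Γ, (∀ i, ∃ k : ℤ, g 0 i = (k : ℚ)) ∧
      ∀ i j, ∃ k : ℤ, LinearMap.toMatrix' (g.linear : (Fin m → ℚ) →ₗ[ℚ] (Fin m → ℚ)) i j = (k : ℚ))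
    (hspan : Submodule.span ℚ
      {v : Fin m → ℚ | AffineEquiv.constVAdd ℚ (Fin m → ℚ) v ∈ Γu} = ⊤)
    (sfac : AffQ m → AffQ m)
    (hsfac : ∀ g ∈ Γ, (sfac g).linear = g.linear ∧
      (sfac g) 0 ∈ LinearMap.range ((g.linear : (Fin m → ℚ) →ₗ[ℚ] (Fin m → ℚ)) - LinearMap.id) ∧
      g 0 - (sfac g) 0 ∈ LinearMap.ker ((g.linear : (Fin m → ℚ) →ₗ[ℚ] (Fin m → ℚ)) - LinearMap.id)) :
    ∃ F : Set (AffQ m), F.Finite ∧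
      ∀ g ∈ Γ, ∃ s ∈ F, ∃ u ∈ Γu, sfac g = u⁻¹ * s * u := by

  classical
  set Θ : Set ((Fin m → ℚ) ≃ₗ[ℚ] (Fin m → ℚ)) :=
    (fun g : AffQ m => g.linear) '' (Γ : Set (AffQ m)) with hΘ
  -- the additive subgroup of translations in Γu
  set Vset : Set (Fin m → ℚ) := {v : Fin m → ℚ | AffineEquiv.constVAdd ℚ (Fin m → ℚ) v ∈ Γu}
    with hVset
  have hVA_zero : (0 : Fin m → ℚ) ∈ Vset := by
    show AffineEquiv.constVAdd ℚ (Fin m → ℚ) 0 ∈ Γu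
    rw [AffineEquiv.constVAdd_zero]
    exact Γu.one_mem
  have hVA_add : ∀ a b : Fin m → ℚ, a ∈ Vset → b ∈ Vset → a + b ∈ Vset := by
    intro a b ha hb
    show AffineEquiv.constVAdd ℚ (Fin m → ℚ) (a + b) ∈ Γu
    rw [AffineEquiv.constVAdd_add]
    exact Γu.mul_mem ha hb
  have hVA_neg : ∀ a : Fin m → ℚ, a ∈ Vset → -a ∈ Vset := by
    intro a ha
    show AffineEquiv.constVAdd ℚ (Fin m → ℚ) (-a) ∈ Γu
    have : AffineEquiv.constVAdd ℚ (Fin m → ℚ) (-a)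
        = (AffineEquiv.constVAdd ℚ (Fin m → ℚ) a)⁻¹ := by
      rw [AffineEquiv.inv_def, AffineEquiv.constVAdd_symm]
    rw [this]
    exact Γu.inv_mem ha
  set VA : AddSubgroup (Fin m → ℚ) :=
    { carrier := Vset
      zero_mem' := hVA_zero
      add_mem' := fun {a b} ha hb => hVA_add a b ha hb
      neg_mem' := fun {a} ha => hVA_neg a ha } with hVA
  set VZ : Submodule ℤ (Fin m → ℚ) := AddSubgroup.toIntSubmodule VA with hVZ
  have key : ∀ S : (Fin m → ℚ) ≃ₗ[ℚ] (Fin m → ℚ), ∃ F : Set (AffQ m), F.Finite ∧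
      ∀ g ∈ Γ, g.linear = S → ∃ s ∈ F, ∃ u ∈ Γu, sfac g = u⁻¹ * s * u := by
    intro S
    by_cases hS : S ∈ Θ
    swap
    · exact ⟨∅, Set.finite_empty, fun g hg hgl => absurd ⟨g, hg, hgl⟩ hS⟩
    -- S has finite order
    obtain ⟨n, hn, hSn⟩ : ∃ n : ℕ, 0 < n ∧ S ^ n = 1 := by
      have hpow : ∀ k : ℕ, S ^ k ∈ Θ := by
        intro k
        obtain ⟨g, hg, rfl⟩ := hS
        refine ⟨g ^ k, pow_mem hg k, ?_⟩
        show (g ^ k).linear = g.linear ^ k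
        exact map_pow (AffineEquiv.linearHom) g k
      haveI : Finite Θ := hhol
      obtain ⟨a, b, hab, heq⟩ := Finite.exists_ne_map_eq_of_infinite
        (fun k : ℕ => (⟨S ^ k, hpow k⟩ : Θ))
      have heq' : S ^ a = S ^ b := congrArg Subtype.val heq
      rcases hab.lt_or_gt with h | h
      · exact ⟨b - a, Nat.sub_pos_of_lt h, pow_sub_eq_one' h heq'⟩
      · exact ⟨a - b, Nat.sub_pos_of_lt h, pow_sub_eq_one' h heq'.symm⟩
    set Sl : (Fin m → ℚ) →ₗ[ℚ] (Fin m → ℚ) := (S : (Fin m → ℚ) →ₗ[ℚ] (Fin m → ℚ)) with hSl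
    have hSln : ∀ x, (Sl ^ n) x = x := by
      intro x
      rw [hSl, Module.End.pow_apply]
      have : (Sl ^ n) x = (S ^ n) x := by
        rw [Module.End.pow_apply, LinearEquiv.pow_apply]; rfl
      rw [← Module.End.pow_apply, this, hSn]
      rfl
    set D : (Fin m → ℚ) →ₗ[ℚ] (Fin m → ℚ) := Sl - LinearMap.id with hD
    set N : Submodule ℤ (Fin m → ℚ) := Submodule.map (D.restrictScalars ℤ) VZ with hN
    set G : Submodule ℤ (Fin m → ℚ) := Submodule.span ℤ
      (Set.range fun i : Fin m => ((n : ℚ)⁻¹ • (Pi.single i (1 : ℚ) : Fin m → ℚ))) with hG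
    set X : Submodule ℤ (Fin m → ℚ) := G ⊓ (LinearMap.range D).restrictScalars ℤ with hX
    -- semisimple translation parts lie in X
    have hmemX : ∀ g, g ∈ Γ → g.linear = S → sfac g 0 ∈ X := by
      intro g hg hgl
      obtain ⟨hlin, hrange, hker⟩ := hsfac g hg
      rw [hgl] at hrange hker
      obtain ⟨hint0, hintM⟩ := hintegral g hg
      rw [hgl] at hintM
      refine Submodule.mem_inf.mpr ⟨?_, hrange⟩
      -- denominators bounded by n
      obtain ⟨y, hy⟩ := hrange
      have hker' : D (g 0 - sfac g 0) = 0 := hker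
      have hid : (n : ℚ) • (sfac g 0) = ∑ k ∈ Finset.range n, (g 0 - (Sl ^ k) (g 0)) :=
        key_identity Sl D hD n hSln (g 0) (sfac g 0) y hy hker'
      have hint : ∀ i, (n : ℚ) * (sfac g 0) i ∈ ZRq := by
        have hSmat : ∀ i j, LinearMap.toMatrix' Sl i j ∈ ZRq := by
          intro i j
          obtain ⟨k, hk⟩ := hintM i j
          exact ⟨k, hk.symm⟩
        have hA : ∀ i, g 0 i ∈ ZRq := by
          intro i
          obtain ⟨k, hk⟩ := hint0 i
          exact ⟨k, hk.symm⟩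
        have hpowA : ∀ k : ℕ, ∀ i, ((Sl ^ k) (g 0)) i ∈ ZRq := by
          intro k
          induction k with
          | zero => simpa using hA
          | succ j ih =>
            intro i
            have : (Sl ^ (j+1)) (g 0) = Sl ((Sl ^ j) (g 0)) := by
              rw [pow_succ', Module.End.mul_apply]
            rw [this]
            exact intmat_preserves Sl hSmat _ ih i
        intro i
        have : (n : ℚ) * (sfac g 0) i = ((n : ℚ) • (sfac g 0)) i := by
          simp
        rw [this, hid, Finset.sum_apply]
        exact Subring.sum_mem _ fun k _ => by
          simpa using sub_mem (hA i) (hpowA k i)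
      exact mem_span_denoms hn _ hint
    -- the image of X in the quotient by N is finite
    have hXfg : X.FG := by
      have hGfg : G.FG := Submodule.fg_span (Set.finite_range _)
      exact (isNoetherian_submodule.mp (isNoetherian_of_fg_of_noetherian G hGfg)) X inf_le_left
    set Y : Submodule ℤ ((Fin m → ℚ) ⧸ N) := Submodule.map N.mkQ X with hY
    have hYfg : Y.FG := hXfg.map _
    haveI hYfin : Finite ↥Y := by
      haveI : Module.Finite ℤ ↥Y := Module.Finite.iff_fg.mpr hYfg
      refine Module.finite_of_fg_torsion ↥Y ?_
      intro y
      obtain ⟨x, hxX, hmk⟩ := y.2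
      have hxr : x ∈ LinearMap.range D := (Submodule.mem_inf.mp hxX).2
      have hxspan : x ∈ Submodule.span ℚ (D '' Vset) := by
        obtain ⟨w, hw⟩ := hxr
        have hw' : w ∈ Submodule.span ℚ Vset := by rw [hspan]; trivial
        have : x ∈ Submodule.map D (Submodule.span ℚ Vset) :=
          ⟨w, hw', hw⟩
        rwa [Submodule.map_span] at this
      have hsub : D '' Vset ⊆ (N : Set (Fin m → ℚ)) := by
        rintro _ ⟨v, hv, rfl⟩
        exact ⟨v, hv, rfl⟩
      obtain ⟨k, hk, hmem⟩ := exists_int_smul_mem_of_mem_span N (D '' Vset) hsub x hxspan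
      refine ⟨⟨k, mem_nonZeroDivisors_of_ne_zero hk⟩, ?_⟩
      have hky : (k • y : ↥Y) = ⟨k • (y : (Fin m → ℚ) ⧸ N), Y.smul_mem k y.2⟩ := rfl
      apply Subtype.ext
      show k • (y : (Fin m → ℚ) ⧸ N) = 0
      rw [← hmk, ← LinearMap.map_smul]
      rw [Submodule.mkQ_apply, Submodule.Quotient.mk_eq_zero]
      rwa [Int.cast_smul_eq_zsmul ℚ] at hmem
    have hYsetfin : (Y : Set ((Fin m → ℚ) ⧸ N)).Finite := Y.carrier.toFinite
    -- classes of semisimple parts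
    set C : Set ((Fin m → ℚ) ⧸ N) :=
      (fun g : AffQ m => N.mkQ (sfac g 0)) '' {g : AffQ m | g ∈ Γ ∧ g.linear = S} with hC
    have hCfin : C.Finite := by
      refine hYsetfin.subset ?_
      rintro _ ⟨g, ⟨hg, hgl⟩, rfl⟩
      exact ⟨sfac g 0, hmemX g hg hgl, rfl⟩
    have hrepex : ∀ c ∈ C, ∃ g : AffQ m, (g ∈ Γ ∧ g.linear = S) ∧ N.mkQ (sfac g 0) = c := by
      rintro c ⟨g, hg, rfl⟩
      exact ⟨g, hg, rfl⟩
    choose rep hrep1 hrep2 using hrepex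
    refine ⟨{x | ∃ c, ∃ hc : c ∈ C, sfac (rep c hc) = x}, hCfin.dependent_image _, ?_⟩
    intro g hg hgl
    set c : (Fin m → ℚ) ⧸ N := N.mkQ (sfac g 0) with hc0
    have hc : c ∈ C := ⟨g, ⟨hg, hgl⟩, rfl⟩
    set r : AffQ m := rep c hc with hr
    have hrΓ : r ∈ Γ := (hrep1 c hc).1
    have hrl : r.linear = S := (hrep1 c hc).2
    have hdiff : sfac g 0 - sfac r 0 ∈ N := by
      have : N.mkQ (sfac g 0 - sfac r 0) = 0 := by
        rw [map_sub, hrep2 c hc, ← hc0, sub_self]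
      rwa [Submodule.mkQ_apply, Submodule.Quotient.mk_eq_zero] at this
    obtain ⟨v, hv, hvD⟩ := hdiff
    refine ⟨sfac r, ⟨c, hc, rfl⟩, AffineEquiv.constVAdd ℚ (Fin m → ℚ) v, hv, ?_⟩
    have hslin : (sfac r).linear = S := (hsfac r hrΓ).1.trans hrl
    refine affq_ext ?_ ?_
    · rw [affq_conj_linear, hslin, (hsfac g hg).1, hgl]
    · rw [affq_conj_eval]
      have hDv : D v = sfac g 0 - sfac r 0 := hvD
      have : (sfac r).linear v = Sl v := by rw [hslin]; rfl
      rw [this]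
      have hSlv : Sl v = D v + v := by
        rw [hD]; simp [LinearMap.sub_apply]
      rw [hSlv, hDv]
      abel
  choose F hFfin hF using key
  refine ⟨⋃ S ∈ Θ, F S, hhol.biUnion fun S _ => hFfin S, ?_⟩
  intro g hg
  obtain ⟨s, hs, u, hu, he⟩ := hF g.linear g hg rfl
  exact ⟨s, Set.mem_biUnion ⟨g, hg, rfl⟩ hs, u, hu, he⟩
end
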